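/- Let θ : F² → End_k(F) be the k-linear map determined by θ(a ⊗ a')(b) = Tr_{F/k}(a'·b)·a for a, a', b ∈ F. Then θ is bijective, and for all x, y ∈ F², θ(x ⋆_1 y) = θ(x) ∘ θ(y), where 1 denotes the identity element of F³. Hence A(F,1) is isomorphic as a k-algebra to End_k(F), the algebra of k-linear endomorphisms of F. -/

import Mathlib

open TensorProduct

universe u

variable (k F : Type u) [Field k] [CommRing F] [Algebra k F]

/-- `ε₀ : F ⊗ F → F ⊗ F ⊗ F`, `x ⊗ y ↦ 1 ⊗ x ⊗ y`. -/
noncomputable def eps0 : F ⊗[k] F →ₐ[k] F ⊗[k] (F ⊗[k] F) :=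
  Algebra.TensorProduct.includeRight

/-- `ε₁ : F ⊗ F → F ⊗ F ⊗ F`, `x ⊗ y ↦ x ⊗ 1 ⊗ y`. -/
noncomputable def eps1 : F ⊗[k] F →ₐ[k] F ⊗[k] (F ⊗[k] F) :=
  Algebra.TensorProduct.map (AlgHom.id k F) Algebra.TensorProduct.includeRight

/-- `ε₂ : F ⊗ F → F ⊗ F ⊗ F`, `x ⊗ y ↦ x ⊗ y ⊗ 1`. -/
noncomputable def eps2 : F ⊗[k] F →ₐ[k] F ⊗[k] (F ⊗[k] F) :=
  Algebra.TensorProduct.map (AlgHom.id k F) Algebra.TensorProduct.includeLeft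

/-- `F³` regarded as an `F²`-algebra via `ε₁`. -/
noncomputable instance : Algebra (F ⊗[k] F) (F ⊗[k] (F ⊗[k] F)) :=
  (eps1 k F).toRingHom.toAlgebra

/-- The trace of `F³` as an `F²`-algebra (via `ε₁`). -/
noncomputable def trF3 : F ⊗[k] (F ⊗[k] F) →ₗ[F ⊗[k] F] F ⊗[k] F :=
  Algebra.trace (F ⊗[k] F) (F ⊗[k] (F ⊗[k] F))

/-- The Brauer-factor-set multiplication `⋆_c` on `F²` attached to `c ∈ F³`,
`x ⋆_c y = Tr(ε₂(x)·c·ε₀(y))`. The `k`-vector space `F²` with this multiplication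
is the algebra `A(F,c)`. -/
noncomputable def starMul (c : F ⊗[k] (F ⊗[k] F)) (x y : F ⊗[k] F) : F ⊗[k] F :=
  trF3 k F (eps2 k F x * c * eps0 k F y)


/-- The `k`-linear map `θ : F² → End_k(F)` with `θ(a ⊗ a')(b) = Tr_{F/k}(a'·b) • a`. -/
noncomputable def theta : F ⊗[k] F →ₗ[k] Module.End k F :=
  (dualTensorHom k F F) ∘ₗ
    (TensorProduct.map (Algebra.traceForm k F) LinearMap.id) ∘ₗ
    (TensorProduct.comm k F F).toLinearMap

/-! ### Auxiliary lemmas -/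

/-- The trace of a base-changed element: `Tr_{A ⊗ F / A}(s ⊗ m) = Tr_{F/k}(m) • s`. -/
lemma trace_tmul_left [FiniteDimensional k F] (A : Type u) [CommRing A] [Algebra k A]
    (s : A) (m : F) :
    Algebra.trace A (A ⊗[k] F) (s ⊗ₜ[k] m) = Algebra.trace k F m • s := by
  have h : (Algebra.lmul A (A ⊗[k] F)) ((1 : A) ⊗ₜ[k] m)
      = ((Algebra.lmul k F m : F →ₗ[k] F).baseChange A) := by
    apply LinearMap.ext
    intro z
    induction z using TensorProduct.induction_on with
    | zero => simp
    | tmul a x => simp [Algebra.TensorProduct.tmul_mul_tmul]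
    | add u v hu hv => simp only [map_add, hu, hv]
  have h2 : (s ⊗ₜ[k] m : A ⊗[k] F) = s • ((1 : A) ⊗ₜ[k] m) := by
    rw [TensorProduct.smul_tmul', smul_eq_mul, mul_one]
  rw [h2, map_smul, Algebra.trace_apply, h, LinearMap.trace_baseChange, ← Algebra.trace_apply,
    smul_eq_mul, Algebra.smul_def, mul_comm]

/-- The `F²`-algebra isomorphism `F³ ≃ F² ⊗ F` (with `F²` acting on the outer factors). -/
noncomputable def psi : F ⊗[k] (F ⊗[k] F) ≃ₐ[k] (F ⊗[k] F) ⊗[k] F :=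
  (Algebra.TensorProduct.congr (AlgEquiv.refl : F ≃ₐ[k] F)
    (Algebra.TensorProduct.comm k F F)).trans (Algebra.TensorProduct.assoc k k k F F F).symm

lemma psi_tmul (a m b : F) :
    psi k F (a ⊗ₜ[k] (m ⊗ₜ[k] b)) = (a ⊗ₜ[k] b) ⊗ₜ[k] m := by
  have h1 : (Algebra.TensorProduct.congr (AlgEquiv.refl : F ≃ₐ[k] F)
      (Algebra.TensorProduct.comm k F F)) (a ⊗ₜ[k] (m ⊗ₜ[k] b)) = a ⊗ₜ[k] (b ⊗ₜ[k] m) := by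
    simp [Algebra.TensorProduct.congr_apply]
  rw [psi, AlgEquiv.trans_apply, h1, AlgEquiv.symm_apply_eq, Algebra.TensorProduct.assoc_tmul]

/-- The key trace computation: `Tr_{F³/F²}(a ⊗ m ⊗ b) = Tr_{F/k}(m) • (a ⊗ b)`. -/
lemma trF3_tmul [FiniteDimensional k F] (a m b : F) :
    trF3 k F (a ⊗ₜ[k] (m ⊗ₜ[k] b)) = Algebra.trace k F m • (a ⊗ₜ[k] b) := by
  have he : (algebraMap (F ⊗[k] F) ((F ⊗[k] F) ⊗[k] F)).comp
        (RingEquiv.refl (F ⊗[k] F) : F ⊗[k] F →+* F ⊗[k] F)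
      = ((psi k F).toRingEquiv : F ⊗[k] (F ⊗[k] F) →+* (F ⊗[k] F) ⊗[k] F).comp
        (algebraMap (F ⊗[k] F) (F ⊗[k] (F ⊗[k] F))) := by
    apply RingHom.ext
    intro x
    show algebraMap (F ⊗[k] F) ((F ⊗[k] F) ⊗[k] F) x = psi k F (eps1 k F x)
    induction x using TensorProduct.induction_on with
    | zero => simp
    | tmul c d =>
        rw [Algebra.TensorProduct.algebraMap_apply]
        rw [show eps1 k F (c ⊗ₜ[k] d) = c ⊗ₜ[k] ((1:F) ⊗ₜ[k] d) by simp [eps1]]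
        rw [psi_tmul]
        simp [Algebra.TensorProduct.algebraMap_apply]
    | add u v hu hv => simp only [map_add, hu, hv]
  have := Algebra.trace_eq_of_equiv_equiv (RingEquiv.refl (F ⊗[k] F)) (psi k F).toRingEquiv he
    (a ⊗ₜ[k] (m ⊗ₜ[k] b))
  rw [trF3, this]
  show Algebra.trace (F ⊗[k] F) ((F ⊗[k] F) ⊗[k] F) (psi k F (a ⊗ₜ[k] (m ⊗ₜ[k] b))) = _
  rw [psi_tmul, trace_tmul_left]

lemma theta_tmul (a a' b : F) :
    theta k F (a ⊗ₜ[k] a') b = Algebra.trace k F (a' * b) • a := by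
  simp [theta, Algebra.traceForm_apply]

section Elem

variable [FiniteDimensional k F] [Algebra.Etale k F]

/-- The multiplication map `F ⊗ F → F` as an `F`-linear map. -/
noncomputable def muL : F ⊗[k] F →ₗ[F] F where
  toFun := Algebra.TensorProduct.lmul' k (S := F)
  map_add' := map_add _
  map_smul' := by
    intro t z
    simp only [RingHom.id_apply, smul_eq_mul]
    rw [Algebra.smul_def, map_mul, Algebra.TensorProduct.algebraMap_apply,
      Algebra.TensorProduct.lmul'_apply_tmul, mul_one, Algebra.algebraMap_self_apply]

/-- `s ↦ (s ⊗ 1) * e` as an `F`-linear map. -/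
noncomputable def uL (e : F ⊗[k] F) : F →ₗ[F] F ⊗[k] F where
  toFun := fun s => (s ⊗ₜ[k] (1:F)) * e
  map_add' := by
    intro x y
    show ((x + y) ⊗ₜ[k] (1:F)) * e = (x ⊗ₜ[k] (1:F)) * e + (y ⊗ₜ[k] (1:F)) * e
    rw [TensorProduct.add_tmul, add_mul]
  map_smul' := by
    intro t s
    show ((t * s) ⊗ₜ[k] (1:F)) * e = t • ((s ⊗ₜ[k] (1:F)) * e)
    rw [show ((t * s) ⊗ₜ[k] (1:F)) = t • (s ⊗ₜ[k] (1:F)) by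
      rw [TensorProduct.smul_tmul', smul_eq_mul],
      smul_mul_assoc]

omit [FiniteDimensional k F] in
lemma elem_mul (w : F ⊗[k] F) :
    Algebra.FormallyUnramified.elem k F * w
      = ((Algebra.TensorProduct.lmul' k (S := F) w) ⊗ₜ[k] (1:F))
        * Algebra.FormallyUnramified.elem k F := by
  induction w using TensorProduct.induction_on with
  | zero => simp
  | tmul x y =>
      have h := Algebra.FormallyUnramified.one_tmul_mul_elem (R := k) (S := F) y
      calc Algebra.FormallyUnramified.elem k F * (x ⊗ₜ[k] y)
          = (x ⊗ₜ[k] (1:F)) * (((1:F) ⊗ₜ[k] y) * Algebra.FormallyUnramified.elem k F) := by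
            rw [← mul_assoc, Algebra.TensorProduct.tmul_mul_tmul, mul_one, one_mul, mul_comm]
        _ = (x ⊗ₜ[k] (1:F)) * ((y ⊗ₜ[k] (1:F)) * Algebra.FormallyUnramified.elem k F) := by
            rw [h]
        _ = _ := by
            rw [← mul_assoc, Algebra.TensorProduct.tmul_mul_tmul, mul_one,
              Algebra.TensorProduct.lmul'_apply_tmul]
  | add u v hu hv =>
      rw [mul_add, hu, hv, map_add, TensorProduct.add_tmul, add_mul]

/-- `Tr_{F⊗F/F}((1 ⊗ a) e) = a` for the separability idempotent `e`. -/
lemma trace_one_tmul_mul_elem (a : F) :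
    Algebra.trace F (F ⊗[k] F) (((1:F) ⊗ₜ[k] a) * Algebra.FormallyUnramified.elem k F) = a := by
  set e := Algebra.FormallyUnramified.elem k F with he
  have hop : (Algebra.lmul F (F ⊗[k] F)) (((1:F) ⊗ₜ[k] a) * e)
      = ((Algebra.lmul F (F ⊗[k] F)) ((1:F) ⊗ₜ[k] a) ∘ₗ uL k F e) ∘ₗ muL k F := by
    apply LinearMap.ext
    intro w
    show (((1:F) ⊗ₜ[k] a) * e) * w
        = ((1:F) ⊗ₜ[k] a) * (((Algebra.TensorProduct.lmul' k (S := F) w) ⊗ₜ[k] (1:F)) * e)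
    rw [mul_assoc, he, elem_mul k F w]
  have hcomp : (muL k F) ∘ₗ ((Algebra.lmul F (F ⊗[k] F)) ((1:F) ⊗ₜ[k] a) ∘ₗ uL k F e)
      = a • LinearMap.id := by
    apply LinearMap.ext
    intro s
    show (Algebra.TensorProduct.lmul' k (S := F))
        (((1:F) ⊗ₜ[k] a) * ((s ⊗ₜ[k] (1:F)) * e)) = a • s
    have h3 : ((1:F) ⊗ₜ[k] a) * ((s ⊗ₜ[k] (1:F)) * e) = ((s * a) ⊗ₜ[k] (1:F)) * e := by
      rw [← mul_assoc, Algebra.TensorProduct.tmul_mul_tmul, one_mul, mul_one]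
      rw [show (s ⊗ₜ[k] a : F ⊗[k] F) = (s ⊗ₜ[k] (1:F)) * ((1:F) ⊗ₜ[k] a) by
        rw [Algebra.TensorProduct.tmul_mul_tmul, mul_one, one_mul]]
      rw [mul_assoc, he, Algebra.FormallyUnramified.one_tmul_mul_elem (R := k) (S := F) a,
        ← mul_assoc, Algebra.TensorProduct.tmul_mul_tmul, mul_one]
    rw [h3, map_mul, Algebra.TensorProduct.lmul'_apply_tmul, mul_one, he,
      Algebra.FormallyUnramified.lmul_elem, mul_one, mul_comm, smul_eq_mul]
  rcases subsingleton_or_nontrivial F with hF | hF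
  · exact Subsingleton.elim _ _
  · rw [Algebra.trace_apply, hop, LinearMap.trace_comp_comm', hcomp, map_smul,
      LinearMap.trace_id, Module.finrank_self, Nat.cast_one, smul_eq_mul, mul_one]

omit [Algebra.Etale k F] in
/-- `θ(z)(a) = Tr_{F⊗F/F}((1 ⊗ a) z)`. -/
lemma theta_apply_eq_trace (z : F ⊗[k] F) (a : F) :
    theta k F z a = Algebra.trace F (F ⊗[k] F) (((1:F) ⊗ₜ[k] a) * z) := by
  induction z using TensorProduct.induction_on with
  | zero => simp
  | tmul x y =>
      rw [theta_tmul, Algebra.TensorProduct.tmul_mul_tmul, one_mul, trace_tmul_left,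
        mul_comm]
  | add u v hu hv => simp only [map_add, mul_add, LinearMap.add_apply, hu, hv]

/-- `θ` of the separability idempotent is the identity. -/
lemma theta_elem_apply (a : F) :
    theta k F (Algebra.FormallyUnramified.elem k F) a = a := by
  rw [theta_apply_eq_trace, trace_one_tmul_mul_elem]

lemma traceForm_injective :
    Function.Injective (Algebra.traceForm k F : F →ₗ[k] Module.Dual k F) := by
  rw [← LinearMap.ker_eq_bot, LinearMap.ker_eq_bot']
  intro a h
  have h2 : theta k F (Algebra.FormallyUnramified.elem k F) a = a := theta_elem_apply k F a
  rw [← h2]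
  generalize Algebra.FormallyUnramified.elem k F = z
  induction z using TensorProduct.induction_on with
  | zero => simp
  | tmul x y =>
      rw [theta_tmul]
      have : Algebra.trace k F (y * a) = 0 := by
        have := LinearMap.congr_fun h y
        simpa [Algebra.traceForm_apply, mul_comm] using this
      rw [this, zero_smul]
  | add u v hu hv => simp only [map_add, LinearMap.add_apply, hu, hv, add_zero]

lemma theta_bijective : Function.Bijective (theta k F) := by
  have h1 : Function.Bijective (Algebra.traceForm k F : F →ₗ[k] Module.Dual k F) := by
    refine ⟨traceForm_injective k F, ?_⟩
    rw [← LinearMap.injective_iff_surjective_of_finrank_eq_finrank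
      (Subspace.dual_finrank_eq (K := k) (V := F)).symm]
    exact traceForm_injective k F
  have e1 : Function.Bijective (TensorProduct.comm k F F).toLinearMap :=
    (TensorProduct.comm k F F).bijective
  have e2 : Function.Bijective
      (TensorProduct.map (Algebra.traceForm k F : F →ₗ[k] Module.Dual k F)
        (LinearMap.id : F →ₗ[k] F)) := by
    let eq : F ≃ₗ[k] Module.Dual k F := LinearEquiv.ofBijective _ h1
    have : (TensorProduct.map (Algebra.traceForm k F : F →ₗ[k] Module.Dual k F)
        (LinearMap.id : F →ₗ[k] F))
        = (TensorProduct.congr eq (LinearEquiv.refl k F)).toLinearMap := by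
      apply TensorProduct.ext'
      intro x y
      simp [eq, TensorProduct.congr_tmul]
    rw [this]
    exact (TensorProduct.congr eq (LinearEquiv.refl k F)).bijective
  have e3 : Function.Bijective (dualTensorHom k F F) := by
    rw [← dualTensorHomEquivOfBasis_toLinearMap (b := Module.Free.chooseBasis k F)]
    exact (dualTensorHomEquivOfBasis (Module.Free.chooseBasis k F)).bijective
  show Function.Bijective ⇑((dualTensorHom k F F) ∘ₗ
    (TensorProduct.map (Algebra.traceForm k F) LinearMap.id) ∘ₗ
    (TensorProduct.comm k F F).toLinearMap)
  simp only [LinearMap.coe_comp]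
  exact e3.comp (e2.comp e1)

end Elem

section Mult

variable [FiniteDimensional k F]

lemma starMul_one_tmul (a a' b b' : F) :
    starMul k F (1 : F ⊗[k] (F ⊗[k] F)) (a ⊗ₜ[k] a') (b ⊗ₜ[k] b')
      = Algebra.trace k F (a' * b) • (a ⊗ₜ[k] b') := by
  rw [starMul]
  have h : eps2 k F (a ⊗ₜ[k] a') * 1 * eps0 k F (b ⊗ₜ[k] b')
      = a ⊗ₜ[k] ((a' * b) ⊗ₜ[k] b') := by
    simp [eps0, eps2, Algebra.TensorProduct.tmul_mul_tmul]
  rw [h, trF3_tmul]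

lemma theta_starMul (x y : F ⊗[k] F) :
    theta k F (starMul k F (1 : F ⊗[k] (F ⊗[k] F)) x y) = theta k F x ∘ₗ theta k F y := by
  have hxadd : ∀ u v y, starMul k F (1 : F ⊗[k] (F ⊗[k] F)) (u + v) y
      = starMul k F 1 u y + starMul k F 1 v y := by
    intro u v y
    simp only [starMul, map_add, add_mul, mul_add]
  have hyadd : ∀ x u v, starMul k F (1 : F ⊗[k] (F ⊗[k] F)) x (u + v)
      = starMul k F 1 x u + starMul k F 1 x v := by
    intro x u v
    simp only [starMul, map_add, add_mul, mul_add]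
  induction x using TensorProduct.induction_on with
  | zero => simp [starMul]
  | add u v hu hv =>
      rw [hxadd, map_add, map_add, hu, hv, LinearMap.add_comp]
  | tmul a a' =>
    induction y using TensorProduct.induction_on with
    | zero => simp [starMul]
    | add u v hu hv =>
        rw [hyadd, map_add, map_add, hu, hv, LinearMap.comp_add]
    | tmul b b' =>
        rw [starMul_one_tmul, map_smul]
        apply LinearMap.ext
        intro c
        simp only [LinearMap.smul_apply, LinearMap.comp_apply]
        rw [theta_tmul k F b b' c, map_smul, theta_tmul, theta_tmul, smul_smul, smul_smul,
          mul_comm]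

end Mult

/-- The map `θ : F² → End_k(F)`, `θ(a ⊗ a')(b) = Tr_{F/k}(a'·b)·a`, is
bijective and satisfies `θ(x ⋆_1 y) = θ(x) ∘ θ(y)` for all `x, y ∈ F²`, where `1` is the
identity of `F³`. Hence `A(F,1)` is isomorphic as a `k`-algebra to `End_k(F)`. -/
theorem theta_bijective_and_multiplicative [FiniteDimensional k F] [Algebra.Etale k F] :
    (∀ (a a' b : F), theta k F (a ⊗ₜ[k] a') b = Algebra.trace k F (a' * b) • a) ∧
    Function.Bijective (theta k F) ∧
    (∀ x y : F ⊗[k] F,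
      theta k F (starMul k F (1 : F ⊗[k] (F ⊗[k] F)) x y) = theta k F x ∘ₗ theta k F y) := by
  exact ⟨theta_tmul k F, theta_bijective k F, theta_starMul k F⟩
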